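/- Let q = p^e be an odd prime power with q - 1 = (N-1)s, N ≥ 3, s ≥ 2, and p ∤ N. With A the N×N matrix over F_q as above (first row all ones, row i = (0,1,g^{(i-1)s},…,g^{(N-2)(i-1)s}) for 2 ≤ i ≤ N-1, last row (0,1,…,1)), the matrix A·Aᵀ is invertible, and in fact there exists a unit lower triangular matrix L over F_q such that L·A·Aᵀ·Lᵀ is a τ-monomial matrix where τ fixes 1 and N and swaps i with N+1-i for 2 ≤ i ≤ N-1. -/

import Mathlib

open Matrix

/-- The N×N matrix A over F_q from Theorem `infinite-type I`. -/
def matA {F : Type*} [Field F] (N s : ℕ) (g : F) : Matrix (Fin N) (Fin N) F :=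
  Matrix.of fun i j =>
    if i.val = 0 then 1
    else if j.val = 0 then 0
    else if i.val = N - 1 then 1
    else g ^ ((j.val - 1) * i.val * s)

lemma geom_aux {F : Type*} [Field F] (n : ℕ) (x : F) (hx1 : x ≠ 1) (hxn : x ^ n = 1) :
    ∑ i ∈ Finset.range n, x ^ i = 0 := by
  have h := geom_sum_mul x n
  rw [hxn, sub_self] at h
  rcases mul_eq_zero.mp h with h | h
  · exact h
  · exact absurd (sub_eq_zero.mp h) hx1

lemma sum_row {F : Type*} [Field F] {N : ℕ} (hN : 1 ≤ N) (h : F)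
    (hord : orderOf h = N - 1) (m : ℕ) :
    ∑ k : Fin N, (if (k : ℕ) = 0 then (0:F) else h ^ (((k : ℕ) - 1) * m)) =
      if (N - 1) ∣ m then ((N - 1 : ℕ) : F) else 0 := by
  rw [Fin.sum_univ_eq_sum_range (fun t => if t = 0 then (0:F) else h ^ ((t - 1) * m)) N]
  obtain ⟨n, rfl⟩ : ∃ n, N = n + 1 := ⟨N - 1, by omega⟩
  simp only [Nat.add_sub_cancel] at hord ⊢
  rw [Finset.sum_range_succ']
  have hsum : ∀ i : ℕ, (if i + 1 = 0 then (0:F) else h ^ ((i + 1 - 1) * m)) = (h ^ m) ^ i := by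
    intro i
    simp only [Nat.succ_ne_zero, if_false, Nat.add_sub_cancel]
    rw [← pow_mul, mul_comm]
  simp only [hsum]
  by_cases hd : n ∣ m
  · have : h ^ m = 1 := orderOf_dvd_iff_pow_eq_one.mp (hord ▸ hd)
    simp [this, hd]
  · have hx1 : h ^ m ≠ 1 := fun hc => hd (hord ▸ orderOf_dvd_of_pow_eq_one hc)
    have hxn : (h ^ m) ^ n = 1 := by
      rw [← pow_mul, mul_comm, pow_mul, ← hord, pow_orderOf_eq_one, one_pow]
    simp [geom_aux n _ hx1 hxn, hd]

lemma matA_apply_ne {F : Type*} [Field F] {N : ℕ} (s : ℕ) (g : F)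
    (hpow : (g ^ s) ^ (N - 1) = 1) (i j : Fin N) (hi : (i : ℕ) ≠ 0) :
    matA N s g i j = if (j : ℕ) = 0 then 0 else (g ^ s) ^ (((j : ℕ) - 1) * (i : ℕ)) := by
  simp only [matA, Matrix.of_apply, if_neg hi]
  by_cases hj : (j : ℕ) = 0
  · simp [hj]
  · rw [if_neg hj, if_neg hj]
    by_cases hiN : (i : ℕ) = N - 1
    · rw [if_pos hiN, hiN, mul_comm ((j : ℕ) - 1) (N - 1), pow_mul, hpow, one_pow]
    · rw [if_neg hiN, ← pow_mul]
      congr 1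
      ring

set_option maxHeartbeats 2000000 in
theorem stmt_4 (p e q N s : ℕ) (hp : p.Prime) (hodd : Odd p) (he : 0 < e)
    (hq : q = p ^ e) (hN : 3 ≤ N) (hs : 2 ≤ s) (hNs : q - 1 = (N - 1) * s)
    (hpN : ¬ p ∣ N)
    {F : Type*} [Field F] [Fintype F] (hF : Fintype.card F = q)
    (g : F) (hg : orderOf g = q - 1) :
    IsUnit (matA N s g * (matA N s g)ᵀ) ∧
    ∃ L : Matrix (Fin N) (Fin N) F,
      (∀ i, L i i = 1) ∧ (∀ i j : Fin N, i < j → L i j = 0) ∧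
      ∀ i j : Fin N, (L * (matA N s g * (matA N s g)ᵀ) * Lᵀ) i j ≠ 0 ↔
        (if i.val = 0 ∨ i.val = N - 1 then j = i else i.val + j.val = N - 1) := by
  -- characteristic
  have hq2 : 2 ≤ q := by
    rw [hq]
    calc 2 ≤ p := hp.two_le
    _ ≤ p ^ e := Nat.le_self_pow (by omega) p
  have hcharF : CharP F p := by
    have hinst : CharP F (ringChar F) := ringChar.charP F
    obtain ⟨n, hrp, hcard⟩ := FiniteField.card F (ringChar F)
    have hdvd : ringChar F ∣ p := by
      have hqr : q = ringChar F ^ (n : ℕ) := by rw [← hF, hcard]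
      have h1 : ringChar F ∣ q := hqr ▸ dvd_pow_self _ n.2.ne'
      exact hrp.dvd_of_dvd_pow (hq ▸ h1)
    have : ringChar F = p := (Nat.prime_dvd_prime_iff_eq hrp hp).mp hdvd
    rwa [this] at hinst
  have hNF : ((N : ℕ) : F) ≠ 0 := by
    rw [Ne, CharP.cast_eq_zero_iff F p]; exact hpN
  have hpN1 : ¬ p ∣ (N - 1) := by
    intro hd
    have h1 : p ∣ q - 1 := hNs ▸ hd.mul_right s
    have h2 : p ∣ q := hq ▸ dvd_pow_self p (by omega)
    have : p ∣ 1 := by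
      have := Nat.dvd_sub h2 h1
      rwa [Nat.sub_sub_self (by omega)] at this
    exact hp.one_lt.ne' (Nat.dvd_one.mp this)
  have hN1F : ((N - 1 : ℕ) : F) ≠ 0 := by
    rw [Ne, CharP.cast_eq_zero_iff F p]; exact hpN1
  -- order of h = g^s
  have hspos : 0 < s := by omega
  have hord : orderOf (g ^ s) = N - 1 := by
    rw [orderOf_pow' g (by omega : s ≠ 0), hg, hNs, Nat.gcd_eq_right (dvd_mul_left s (N - 1)),
      Nat.mul_div_cancel _ hspos]
  have hpow : (g ^ s) ^ (N - 1) = 1 := by rw [← hord]; exact pow_orderOf_eq_one _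
  set B := matA N s g * (matA N s g)ᵀ with hBdef
  -- entries of B
  have hB : ∀ i j : Fin N, B i j =
      if (i : ℕ) = 0 then
        (if (j : ℕ) = 0 then ((N : ℕ) : F) else if (j : ℕ) = N - 1 then ((N - 1 : ℕ) : F) else 0)
      else if (j : ℕ) = 0 then
        (if (i : ℕ) = N - 1 then ((N - 1 : ℕ) : F) else 0)
      else if (i : ℕ) + (j : ℕ) = N - 1 ∨ ((i : ℕ) = N - 1 ∧ (j : ℕ) = N - 1) then
        ((N - 1 : ℕ) : F)
      else 0 := by
    intro i j
    have hdvd1 : ∀ a : Fin N, (a : ℕ) ≠ 0 → ((N - 1) ∣ (a : ℕ) ↔ (a : ℕ) = N - 1) := by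
      intro a ha
      constructor
      · intro hd
        have := Nat.le_of_dvd (by omega) hd
        have := a.isLt
        omega
      · intro h; rw [h]
    rw [hBdef, Matrix.mul_apply]
    simp only [Matrix.transpose_apply]
    by_cases hi : (i : ℕ) = 0
    · have hAi : ∀ k : Fin N, matA N s g i k = 1 := by
        intro k; simp [matA, hi]
      by_cases hj : (j : ℕ) = 0
      · have hAj : ∀ k : Fin N, matA N s g j k = 1 := by
          intro k; simp [matA, hj]
        simp [hAi, hAj, hi, hj, Finset.card_univ]
      · simp only [hAi, one_mul]
        have : ∀ k : Fin N, matA N s g j k =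
            if (k : ℕ) = 0 then (0:F) else (g ^ s) ^ (((k : ℕ) - 1) * (j : ℕ)) := by
          intro k; exact matA_apply_ne s g hpow j k hj
        simp only [this]
        rw [sum_row (by omega) _ hord]
        rw [if_pos hi, if_neg hj]
        by_cases hd : (j : ℕ) = N - 1
        · rw [if_pos ((hdvd1 j hj).mpr hd), if_pos hd]
        · rw [if_neg (fun hc => hd ((hdvd1 j hj).mp hc)), if_neg hd]
    · by_cases hj : (j : ℕ) = 0
      · have hAj : ∀ k : Fin N, matA N s g j k = 1 := by
          intro k; simp [matA, hj]
        simp only [hAj, mul_one]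
        have : ∀ k : Fin N, matA N s g i k =
            if (k : ℕ) = 0 then (0:F) else (g ^ s) ^ (((k : ℕ) - 1) * (i : ℕ)) := by
          intro k; exact matA_apply_ne s g hpow i k hi
        simp only [this]
        rw [sum_row (by omega) _ hord]
        rw [if_neg hi, if_pos hj]
        by_cases hd : (i : ℕ) = N - 1
        · rw [if_pos ((hdvd1 i hi).mpr hd), if_pos hd]
        · rw [if_neg (fun hc => hd ((hdvd1 i hi).mp hc)), if_neg hd]
      · have hterm : ∀ k : Fin N, matA N s g i k * matA N s g j k =
            if (k : ℕ) = 0 then (0:F) else (g ^ s) ^ (((k : ℕ) - 1) * ((i : ℕ) + (j : ℕ))) := by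
          intro k
          rw [matA_apply_ne s g hpow i k hi, matA_apply_ne s g hpow j k hj]
          by_cases hk : (k : ℕ) = 0
          · simp [hk]
          · rw [if_neg hk, if_neg hk, if_neg hk, ← pow_add, ← Nat.mul_add]
        simp only [hterm]
        rw [sum_row (by omega) _ hord]
        rw [if_neg hi, if_neg hj]
        have hdvd2 : (N - 1) ∣ ((i : ℕ) + (j : ℕ)) ↔
            ((i : ℕ) + (j : ℕ) = N - 1 ∨ ((i : ℕ) = N - 1 ∧ (j : ℕ) = N - 1)) := by
          constructor
          · intro hd
            obtain ⟨t, ht⟩ := hd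
            have hib := i.isLt
            have hjb := j.isLt
            have ht3 : t < 3 := by
              by_contra hc
              push_neg at hc
              have : (N - 1) * 3 ≤ (N - 1) * t := Nat.mul_le_mul_left _ hc
              omega
            interval_cases t <;> omega
          · rintro (h | ⟨h1, h2⟩)
            · rw [h]
            · rw [h1, h2, ← Nat.mul_two]; exact Dvd.intro 2 rfl
        by_cases hd : (i : ℕ) + (j : ℕ) = N - 1 ∨ ((i : ℕ) = N - 1 ∧ (j : ℕ) = N - 1)
        · rw [if_pos (hdvd2.mpr hd), if_pos hd]
        · rw [if_neg (fun hc => hd (hdvd2.mp hc)), if_neg hd]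
  -- the transvection
  have hNpos : (0 : ℕ) < N := by omega
  set z : Fin N := ⟨0, hNpos⟩ with hzdef
  set w : Fin N := ⟨N - 1, by omega⟩ with hwdef
  have hwz : w ≠ z := by
    intro h
    have : (w : Fin N).val = (z : Fin N).val := by rw [h]
    simp [hwdef, hzdef] at this
    omega
  set c : F := -((N - 1 : ℕ) : F) / ((N : ℕ) : F) with hcdef
  set L : Matrix (Fin N) (Fin N) F := Matrix.transvection w z c with hLdef
  have hLeq : L = 1 + Matrix.single w z c := rfl
  -- key field identities
  have hcast : ((N - 1 : ℕ) : F) = ((N : ℕ) : F) - 1 := by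
    push_cast [Nat.cast_sub (by omega : 1 ≤ N)]; ring
  have key1 : ((N - 1 : ℕ) : F) + c * ((N : ℕ) : F) = 0 := by
    rw [hcdef]; field_simp; ring
  have key2 : ((N - 1 : ℕ) : F) + c * ((N - 1 : ℕ) : F) = ((N - 1 : ℕ) : F) / ((N : ℕ) : F) := by
    rw [hcdef, hcast]; field_simp; ring
  -- entries of L * B
  have hC : ∀ i j : Fin N, (L * B) i j = B i j + (if i = w then c * B z j else 0) := by
    intro i j
    rw [hLeq, add_mul, one_mul, Matrix.add_apply]
    congr 1
    by_cases hiw : i = w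
    · subst hiw; rw [Matrix.single_mul_apply_same, if_pos rfl]
    · rw [Matrix.single_mul_apply_of_ne (h := hiw), if_neg hiw]
  have hD : ∀ i j : Fin N, (L * B * Lᵀ) i j =
      (L * B) i j + (if j = w then (L * B) i z * c else 0) := by
    intro i j
    have : Lᵀ = 1 + Matrix.single z w c := by
      rw [hLeq, Matrix.transpose_add, Matrix.transpose_one]
      congr 1
      ext a b
      simp only [Matrix.transpose_apply, Matrix.single, Matrix.of_apply]
      by_cases h1 : w = b <;> by_cases h2 : z = a <;> simp [h1, h2, and_comm]
    rw [this, mul_add, mul_one, Matrix.add_apply]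
    congr 1
    by_cases hjw : j = w
    · subst hjw; rw [Matrix.mul_single_apply_same]; rw [if_pos rfl]
    · rw [Matrix.mul_single_apply_of_ne (hbj := hjw), if_neg hjw]
  have hzval : (z : ℕ) = 0 := rfl
  have hwval : (w : ℕ) = N - 1 := rfl
  -- entries of M = L * B * Lᵀ
  have hM : ∀ i j : Fin N, (L * B * Lᵀ) i j =
      if (i : ℕ) = 0 then (if (j : ℕ) = 0 then ((N : ℕ) : F) else 0)
      else if (i : ℕ) = N - 1 then
        (if (j : ℕ) = N - 1 then ((N - 1 : ℕ) : F) / ((N : ℕ) : F) else 0)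
      else (if (i : ℕ) + (j : ℕ) = N - 1 then ((N - 1 : ℕ) : F) else 0) := by
    intro i j
    rw [hD, hC, hC]
    simp only [hB, Fin.ext_iff, hzval, hwval]
    have hib := i.isLt
    have hjb := j.isLt
    have hNN : ((N - 1 : ℕ) : F) = ((N : ℕ) : F) - 1 := hcast
    split_ifs <;>
      first
        | rfl
        | omega
        | (simp only [hcdef, hNN] at *
           try field_simp
           try ring)

  -- explicit inverse of M
  set M' : Matrix (Fin N) (Fin N) F := Matrix.of fun i j =>
      if (i : ℕ) = 0 then (if (j : ℕ) = 0 then (((N : ℕ) : F))⁻¹ else 0)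
      else if (i : ℕ) = N - 1 then
        (if (j : ℕ) = N - 1 then ((N : ℕ) : F) / ((N - 1 : ℕ) : F) else 0)
      else (if (i : ℕ) + (j : ℕ) = N - 1 then (((N - 1 : ℕ) : F))⁻¹ else 0) with hM'def
  have hMM' : (L * B * Lᵀ) * M' = 1 := by
    ext i j
    rw [Matrix.mul_apply, Matrix.one_apply]
    have hib := i.isLt
    have hjb := j.isLt
    by_cases hi0 : (i : ℕ) = 0
    · rw [Finset.sum_eq_single_of_mem z (Finset.mem_univ z) (fun k _ hk => by
        have hk0 : (k : ℕ) ≠ 0 := fun h => hk (Fin.ext h)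
        rw [hM]
        simp only [hM'def, Matrix.of_apply]
        split_ifs <;> first | omega | ring)]
      rw [hM]
      simp only [hM'def, Matrix.of_apply, Fin.ext_iff, hzval]
      split_ifs <;> first | omega | exact mul_inv_cancel₀ hNF | ring
    · by_cases hiN : (i : ℕ) = N - 1
      · rw [Finset.sum_eq_single_of_mem w (Finset.mem_univ w) (fun k _ hk => by
          have hkN : (k : ℕ) ≠ N - 1 := fun h => hk (Fin.ext (h.trans hwval.symm))
          rw [hM]
          simp only [hM'def, Matrix.of_apply]
          split_ifs <;> first | omega | ring)]
        rw [hM]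
        simp only [hM'def, Matrix.of_apply, Fin.ext_iff, hwval]
        split_ifs <;>
          first
            | omega
            | (rw [div_mul_div_comm, mul_comm]; exact div_self (mul_ne_zero hNF hN1F))
            | ring
      · set k0 : Fin N := ⟨N - 1 - (i : ℕ), by omega⟩ with hk0def
        have hk0val : (k0 : ℕ) = N - 1 - (i : ℕ) := rfl
        rw [Finset.sum_eq_single_of_mem k0 (Finset.mem_univ k0) (fun k _ hk => by
          have hkv : (k : ℕ) ≠ N - 1 - (i : ℕ) := fun h => hk (Fin.ext (h.trans hk0val.symm))
          rw [hM]
          simp only [hM'def, Matrix.of_apply]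
          split_ifs <;> first | omega | ring)]
        rw [hM]
        simp only [hM'def, Matrix.of_apply, Fin.ext_iff, hk0val]
        split_ifs <;> first | omega | exact mul_inv_cancel₀ hN1F | ring

  -- invertibility
  have hdetL : L.det = 1 := Matrix.det_transvection_of_ne w z hwz c
  have hBunit : IsUnit B := by
    rw [Matrix.isUnit_iff_isUnit_det]
    have hdet1 : (L * B * Lᵀ).det * M'.det = 1 := by
      rw [← Matrix.det_mul, hMM', Matrix.det_one]
    rw [Matrix.det_mul, Matrix.det_mul, Matrix.det_transpose, hdetL, one_mul, mul_one] at hdet1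
    exact IsUnit.of_mul_eq_one _ hdet1
  refine ⟨hBunit, L, ?_, ?_, ?_⟩
  · intro i
    rw [hLeq, Matrix.add_apply, Matrix.one_apply_eq]
    have : Matrix.single w z c i i = 0 := by
      simp only [Matrix.single, Matrix.of_apply]
      rw [if_neg]
      rintro ⟨h1, h2⟩
      exact hwz (h1.trans h2.symm)
    rw [this, add_zero]
  · intro i j hij
    rw [hLeq, Matrix.add_apply, Matrix.one_apply_ne (Fin.ne_of_lt hij)]
    have : Matrix.single w z c i j = 0 := by
      simp only [Matrix.single, Matrix.of_apply]
      rw [if_neg]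
      rintro ⟨h1, h2⟩
      have h1' : (i : ℕ) = N - 1 := by rw [← h1, hwval]
      have h2' : (j : ℕ) = 0 := by rw [← h2, hzval]
      have := Fin.lt_iff_val_lt_val.mp hij
      omega
    rw [this, add_zero]
  · intro i j
    have hib := i.isLt
    have hjb := j.isLt
    rw [hM]
    simp only [Fin.ext_iff, ne_eq]
    split_ifs <;>
      simp_all [hNF, hN1F, div_eq_zero_iff]
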